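/- Convergence of multiple zeta values: for every integer d ≥ 1 and every tuple (k₁,…,k_d) of positive integers with k_d ≥ 2, the family of real numbers 1/(n₁^{k₁}⋯n_d^{k_d}), indexed by strictly increasing d-tuples (n₁,…,n_d) of positive integers, is summable; in particular the multiple zeta value ζ(k₁,…,k_d) := ∑_{0<n₁<⋯<n_d} 1/(n₁^{k₁}⋯n_d^{k_d}) is well defined. -/

import Mathlib

open Finset

lemma summable_pi_prod {d : ℕ} (g : ℕ+ → ℝ) (hg : Summable g) (hg0 : ∀ n, 0 ≤ g n) :
    Summable (fun m : Fin d → ℕ+ => ∏ i, g (m i)) := by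
  induction d with
  | zero => exact Summable.of_finite
  | succ d ih =>
      have h := hg.mul_of_nonneg ih hg0 (fun m => prod_nonneg fun i _ => hg0 _)
      have := ((Fin.consEquiv (fun _ : Fin (d + 1) => ℕ+)).symm.summable_iff
        (f := fun p : ℕ+ × (Fin d → ℕ+) => g p.1 * ∏ i, g (p.2 i))).2 h
      refine this.congr fun m => ?_
      simp [Fin.consEquiv, Fin.prod_univ_succ, Fin.tail]

/-- The value preceding position `j` in the tuple `g` (or `0` for `j = 0`). -/
def mzvPrev {d : ℕ} (g : Fin d → ℕ+) (j : Fin d) : ℕ :=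
  if h : 0 < (j : ℕ) then (g ⟨(j : ℕ) - 1, by have := j.isLt; omega⟩ : ℕ) else 0

lemma mzvPrev_lt {d : ℕ} {g : Fin d → ℕ+} (hg : StrictMono g) (j : Fin d) :
    mzvPrev g j < (g j : ℕ) := by
  unfold mzvPrev
  split_ifs with h
  · exact (PNat.coe_lt_coe _ _).mpr (hg (by simp [Fin.lt_def]; omega))
  · exact (g j).2

/-- The gap map, sending a strictly increasing tuple to its consecutive differences. -/
def mzvGap {d : ℕ} (a : {g : Fin d → ℕ+ // StrictMono g}) (j : Fin d) : ℕ+ :=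
  ⟨(a.1 j : ℕ) - mzvPrev a.1 j, Nat.sub_pos_of_lt (mzvPrev_lt a.2 j)⟩

lemma mzvGap_coe {d : ℕ} (a : {g : Fin d → ℕ+ // StrictMono g}) (j : Fin d) :
    (mzvGap a j : ℕ) = (a.1 j : ℕ) - mzvPrev a.1 j := rfl

lemma mzvGap_le {d : ℕ} (a : {g : Fin d → ℕ+ // StrictMono g}) (j : Fin d) :
    (mzvGap a j : ℕ) ≤ (a.1 j : ℕ) := Nat.sub_le _ _

lemma mzvGap_injective {d : ℕ} :
    Function.Injective (mzvGap (d := d)) := by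
  intro a b hab
  have key : ∀ n : ℕ, ∀ j : Fin d, (j : ℕ) ≤ n → a.1 j = b.1 j := by
    intro n
    induction n with
    | zero =>
        intro j hj
        have h : (mzvGap a j : ℕ) = (mzvGap b j : ℕ) := by rw [hab]
        rw [mzvGap_coe, mzvGap_coe] at h
        have hj0 : ¬ 0 < (j : ℕ) := by omega
        rw [mzvPrev, mzvPrev, dif_neg hj0, dif_neg hj0] at h
        exact PNat.coe_injective (by omega)
    | succ n ih =>
        intro j hj
        rcases Nat.lt_or_ge (j : ℕ) (n + 1) with h' | h'
        · exact ih j (by omega)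
        · have h : (mzvGap a j : ℕ) = (mzvGap b j : ℕ) := by rw [hab]
          rw [mzvGap_coe, mzvGap_coe] at h
          have hj0 : 0 < (j : ℕ) := by omega
          rw [mzvPrev, mzvPrev, dif_pos hj0, dif_pos hj0] at h
          have hprev : a.1 ⟨(j : ℕ) - 1, by have := j.isLt; omega⟩
              = b.1 ⟨(j : ℕ) - 1, by have := j.isLt; omega⟩ := ih _ (by simp; omega)
          have hap : (a.1 ⟨(j : ℕ) - 1, by have := j.isLt; omega⟩ : ℕ) < (a.1 j : ℕ) :=
            (PNat.coe_lt_coe _ _).mpr (a.2 (by simp [Fin.lt_def]; omega))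
          have hbp : (b.1 ⟨(j : ℕ) - 1, by have := j.isLt; omega⟩ : ℕ) < (b.1 j : ℕ) :=
            (PNat.coe_lt_coe _ _).mpr (b.2 (by simp [Fin.lt_def]; omega))
          rw [hprev] at h hap
          exact PNat.coe_injective (by omega)
  exact Subtype.ext (funext fun j => key (j : ℕ) j le_rfl)

set_option maxHeartbeats 1000000 in
/-- Convergence of multiple zeta values: for `d ≥ 1` and positive integers
`k₁,…,k_d` with `k_d ≥ 2`, the family `1/(n₁^{k₁}⋯n_d^{k_d})`, indexed by
strictly increasing `d`-tuples of positive integers, is summable; in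
particular `ζ(k₁,…,k_d)` is well defined. -/
theorem mzv_summable (d : ℕ) (hd : 1 ≤ d) (k : Fin d → ℕ+)
    (hk : 2 ≤ (k ⟨d - 1, by omega⟩ : ℕ)) :
    Summable (fun f : {g : Fin d → ℕ+ // StrictMono g} =>
      (1 : ℝ) / ∏ i : Fin d, ((f.1 i : ℕ) : ℝ) ^ ((k i : ℕ+) : ℕ)) := by
  have hd0 : (0:ℝ) < d := by exact_mod_cast hd
  obtain ⟨q, hq⟩ : ∃ q : ℝ, q = 1 + (d : ℝ)⁻¹ := ⟨_, rfl⟩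
  -- summability of the dominating family
  have hsum1 : Summable (fun n : ℕ => (n : ℝ) ^ (-q)) :=
    Real.summable_nat_rpow.mpr (by rw [hq]; nlinarith [inv_pos.mpr hd0])
  have hsum2 : Summable (fun n : ℕ+ => ((n : ℕ) : ℝ) ^ (-q)) :=
    hsum1.comp_injective PNat.coe_injective
  have hF : Summable (fun m : Fin d → ℕ+ => ∏ i, ((m i : ℕ) : ℝ) ^ (-q)) :=
    summable_pi_prod (fun n : ℕ+ => ((n : ℕ) : ℝ) ^ (-q)) hsum2 (fun n => Real.rpow_nonneg (Nat.cast_nonneg _) _)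
  have hFg : Summable ((fun m : Fin d → ℕ+ => ∏ i, ((m i : ℕ) : ℝ) ^ (-q)) ∘ mzvGap) :=
    hF.comp_injective mzvGap_injective
  -- comparison
  refine Summable.of_nonneg_of_le (fun a => by positivity) (fun a => ?_) hFg
  set last : Fin d := ⟨d - 1, by omega⟩ with hlast
  -- key inequality for a fixed strictly increasing tuple
  set P : ℕ := ∏ j, (mzvGap a j : ℕ) with hP
  have hP1 : 1 ≤ P := one_le_prod' (fun j _ => (mzvGap a j).2)
  have hjle : ∀ j : Fin d, (a.1 j : ℕ) ≤ (a.1 last : ℕ) := by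
    intro j
    exact_mod_cast a.2.monotone (show j ≤ last by
      simp [hlast, Fin.le_def]; have := j.isLt; omega)
  have hPled : P ≤ (a.1 last : ℕ) ^ d := by
    calc P ≤ ∏ _j : Fin d, (a.1 last : ℕ) :=
          Finset.prod_le_prod' (fun j _ => (mzvGap_le a j).trans (hjle j))
      _ = (a.1 last : ℕ) ^ d := by simp
  have hmain : P * (a.1 last : ℕ) ≤ ∏ j, (a.1 j : ℕ) ^ ((k j : ℕ+) : ℕ) := by
    have hfac : ∀ j : Fin d, (mzvGap a j : ℕ) * (if j = last then (a.1 last : ℕ) else 1)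
        ≤ (a.1 j : ℕ) ^ ((k j : ℕ+) : ℕ) := by
      intro j
      by_cases hj : j = last
      · rw [if_pos hj, hj]
        calc (mzvGap a last : ℕ) * (a.1 last : ℕ) ≤ (a.1 last : ℕ) * (a.1 last : ℕ) :=
              Nat.mul_le_mul_right _ (mzvGap_le a last)
          _ = (a.1 last : ℕ) ^ 2 := (sq _).symm
          _ ≤ (a.1 last : ℕ) ^ ((k last : ℕ+) : ℕ) :=
              Nat.pow_le_pow_right (a.1 last).2 hk
      · rw [if_neg hj, mul_one]
        calc (mzvGap a j : ℕ) ≤ (a.1 j : ℕ) := mzvGap_le a j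
          _ = (a.1 j : ℕ) ^ 1 := (pow_one _).symm
          _ ≤ (a.1 j : ℕ) ^ ((k j : ℕ+) : ℕ) := Nat.pow_le_pow_right (a.1 j).2 (k j).2
    calc P * (a.1 last : ℕ)
        = ∏ j, ((mzvGap a j : ℕ) * (if j = last then (a.1 last : ℕ) else 1)) := by
          rw [Finset.prod_mul_distrib, Finset.prod_ite_eq' Finset.univ last
            (fun _ => (a.1 last : ℕ))]
          simp
          exact hP
      _ ≤ ∏ j, (a.1 j : ℕ) ^ ((k j : ℕ+) : ℕ) := Finset.prod_le_prod' (fun j _ => hfac j)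
  -- pass to the reals
  have hPr1 : (1:ℝ) ≤ (P : ℝ) := by exact_mod_cast hP1
  have hPr0 : (0:ℝ) < (P : ℝ) := lt_of_lt_of_le one_pos hPr1
  have hx0 : (0:ℝ) ≤ ((a.1 last : ℕ) : ℝ) := Nat.cast_nonneg _
  have hroot : (P : ℝ) ^ ((d : ℝ)⁻¹) ≤ ((a.1 last : ℕ) : ℝ) := by
    have h1 : (P : ℝ) ≤ ((a.1 last : ℕ) : ℝ) ^ (d : ℕ) := by exact_mod_cast hPled
    calc (P : ℝ) ^ ((d : ℝ)⁻¹) ≤ (((a.1 last : ℕ) : ℝ) ^ (d : ℕ)) ^ ((d : ℝ)⁻¹) :=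
          Real.rpow_le_rpow hPr0.le h1 (by positivity)
      _ = ((a.1 last : ℕ) : ℝ) := by
          rw [← Real.rpow_natCast ((a.1 last : ℕ) : ℝ) d, ← Real.rpow_mul hx0,
            mul_inv_cancel₀ (ne_of_gt hd0), Real.rpow_one]
  have hPq : (P : ℝ) ^ q ≤ ∏ j, ((a.1 j : ℕ) : ℝ) ^ ((k j : ℕ+) : ℕ) := by
    calc (P : ℝ) ^ q = (P : ℝ) * (P : ℝ) ^ ((d : ℝ)⁻¹) := by
          rw [hq, Real.rpow_add hPr0, Real.rpow_one]
      _ ≤ (P : ℝ) * ((a.1 last : ℕ) : ℝ) :=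
          mul_le_mul_of_nonneg_left hroot hPr0.le
      _ ≤ ∏ j, ((a.1 j : ℕ) : ℝ) ^ ((k j : ℕ+) : ℕ) := by
          have h3 : ((P * (a.1 last : ℕ) : ℕ) : ℝ)
              ≤ ((∏ j, (a.1 j : ℕ) ^ ((k j : ℕ+) : ℕ) : ℕ) : ℝ) := Nat.cast_le.mpr hmain
          push_cast at h3
          exact h3
  have hPq0 : (0:ℝ) < (P : ℝ) ^ q := Real.rpow_pos_of_pos hPr0 _
  calc (1 : ℝ) / ∏ i, ((a.1 i : ℕ) : ℝ) ^ ((k i : ℕ+) : ℕ)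
      ≤ 1 / (P : ℝ) ^ q := one_div_le_one_div_of_le hPq0 hPq
    _ = (P : ℝ) ^ (-q) := by rw [Real.rpow_neg hPr0.le, one_div]
    _ = ∏ i, ((mzvGap a i : ℕ) : ℝ) ^ (-q) := by
        rw [hP]
        push_cast
        rw [Real.finset_prod_rpow _ _ (fun i _ => Nat.cast_nonneg _)]
    _ = ((fun m : Fin d → ℕ+ => ∏ i, ((m i : ℕ) : ℝ) ^ (-q)) ∘ mzvGap) a := rfl
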